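/- Any 𝒞-quasi-isomorphism between two bounded-above complexes whose terms all lie in 𝒞 is a homotopy equivalence. -/

import Mathlib

open CategoryTheory Limits

universe v u

variable {A : Type u} [Category.{v} A] [Abelian A]

/-- A complex `X` is `𝒞`-acyclic if `Hom_𝒜(C, X)` is an acyclic complex of abelian
groups for every `C ∈ 𝒞`. -/
def CAcyclic (𝒞 : Set A) (X : CochainComplex A ℤ) : Prop :=
  ∀ C ∈ 𝒞, ∀ i : ℤ,
    (((preadditiveCoyoneda.obj (Opposite.op C)).mapHomologicalComplex
      (ComplexShape.up ℤ)).obj X).ExactAt i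

/-- A chain map `f` is a `𝒞`-quasi-isomorphism if `Hom_𝒜(C, f)` is a quasi-isomorphism
for every `C ∈ 𝒞`. -/
def CQuasiIso (𝒞 : Set A) {X Y : CochainComplex A ℤ} (f : X ⟶ Y) : Prop :=
  ∀ C ∈ 𝒞, QuasiIso (((preadditiveCoyoneda.obj (Opposite.op C)).mapHomologicalComplex
      (ComplexShape.up ℤ)).map f)

/-- A cochain complex is bounded above. -/
def BoundedAbove (X : CochainComplex A ℤ) : Prop :=
  ∃ n : ℤ, ∀ i : ℤ, n < i → IsZero (X.X i)

/-- Exactness of `Hom(C, Z)` at `n` as a surjectivity statement. -/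
lemma exact_surj {C : A} {Z : CochainComplex A ℤ} (n : ℤ)
    (h : (((preadditiveCoyoneda.obj (Opposite.op C)).mapHomologicalComplex
      (ComplexShape.up ℤ)).obj Z).ExactAt n)
    (z : C ⟶ Z.X n) (hz : z ≫ Z.d n (n+1) = 0) :
    ∃ w : C ⟶ Z.X (n-1), w ≫ Z.d (n-1) n = z := by
  rw [HomologicalComplex.exactAt_iff' _ (n-1) n (n+1) (by simp) (by simp)] at h
  exact (ShortComplex.ab_exact_iff _).1 h z hz

open scoped Classical in
/-- Auxiliary construction of a contracting homotopy by descending recursion. -/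
noncomputable def con (Z : CochainComplex A ℤ) (N : ℤ) (i j : ℤ) : Z.X i ⟶ Z.X j :=
  if N < i then 0
  else if j + 1 = i then
    (if h : ∃ w : Z.X i ⟶ Z.X j, w ≫ Z.d j i = 𝟙 (Z.X i) - Z.d i (i+1) ≫ con Z N (i+1) i
      then h.choose else 0)
  else 0
termination_by (N + 2 - i).toNat
decreasing_by omega

lemma con_zero (Z : CochainComplex A ℤ) (N : ℤ) (i j : ℤ) (hij : j + 1 ≠ i) :
    con Z N i j = 0 := by
  rw [con]
  split_ifs <;> first | rfl | (exfalso; omega)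

lemma con_spec (Z : CochainComplex A ℤ) (N : ℤ) (hN : ∀ i, N < i → IsZero (Z.X i))
    (hsurj : ∀ (n : ℤ) (z : Z.X n ⟶ Z.X n), z ≫ Z.d n (n+1) = 0 →
      ∃ w : Z.X n ⟶ Z.X (n-1), w ≫ Z.d (n-1) n = z) (i : ℤ) :
    con Z N i (i-1) ≫ Z.d (i-1) i = 𝟙 (Z.X i) - Z.d i (i+1) ≫ con Z N (i+1) i := by
  suffices H : ∀ (k : ℕ) (i : ℤ), N < i + k →
      con Z N i (i-1) ≫ Z.d (i-1) i = 𝟙 (Z.X i) - Z.d i (i+1) ≫ con Z N (i+1) i by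
    exact H (N + 1 - i).toNat i (by omega)
  intro k
  induction k with
  | zero =>
      intro i hi
      simp only [Int.natCast_zero, add_zero] at hi
      rw [con, if_pos hi, con, if_pos (by omega)]
      simp only [zero_comp, comp_zero, sub_zero]
      exact ((hN i hi).eq_of_src _ _).symm
  | succ k ih =>
      intro i hi
      by_cases hNi : N < i
      · rw [con, if_pos hNi, con, if_pos (by omega)]
        simp only [zero_comp, comp_zero, sub_zero]
        exact ((hN i hNi).eq_of_src _ _).symm
      · have hK := ih (i+1) (by omega)
        rw [show i+1-1 = i from by omega] at hK
        have hcycle : (𝟙 (Z.X i) - Z.d i (i+1) ≫ con Z N (i+1) i) ≫ Z.d i (i+1) = 0 := by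
          rw [Preadditive.sub_comp, Category.id_comp, Category.assoc, hK]
          simp [Preadditive.comp_sub]
        obtain ⟨w, hw⟩ := hsurj i _ hcycle
        have hex : ∃ w : Z.X i ⟶ Z.X (i-1), w ≫ Z.d (i-1) i
            = 𝟙 (Z.X i) - Z.d i (i+1) ≫ con Z N (i+1) i := ⟨w, hw⟩
        rw [con, if_neg hNi, if_pos (by omega), dif_pos hex]
        exact hex.choose_spec

/-- A bounded-above complex all of whose `Hom(Zⁿ, Z)` complexes are exact is contractible. -/
noncomputable def contraction (Z : CochainComplex A ℤ) (N : ℤ)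
    (hN : ∀ i, N < i → IsZero (Z.X i))
    (hsurj : ∀ (n : ℤ) (z : Z.X n ⟶ Z.X n), z ≫ Z.d n (n+1) = 0 →
      ∃ w : Z.X n ⟶ Z.X (n-1), w ≫ Z.d (n-1) n = z) :
    Homotopy (𝟙 Z) 0 where
  hom i j := con Z N i j
  zero i j h := con_zero Z N i j (by simpa using h)
  comm i := by
    rw [dNext_eq _ (show (ComplexShape.up ℤ).Rel i (i+1) by simp),
      prevD_eq _ (show (ComplexShape.up ℤ).Rel (i-1) i by simp)]
    have := con_spec Z N hN hsurj i
    simp only [HomologicalComplex.id_f, HomologicalComplex.zero_f, add_zero]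
    rw [this]
    abel

/-- The mapping cone of a `𝒞`-quasi-isomorphism is `𝒞`-acyclic. -/
lemma cone_cacyclic (𝒞 : Set A) {X Y : CochainComplex A ℤ} (f : X ⟶ Y)
    (hf : CQuasiIso 𝒞 f) : CAcyclic 𝒞 (CochainComplex.mappingCone f) := by
  intro C hC n
  set F := (preadditiveCoyoneda.obj (Opposite.op C)).mapHomologicalComplex
      (ComplexShape.up ℤ) with hF
  have hq : QuasiIso (F.map f) := hf C hC
  have h1 : HomotopyCategory.quasiIso _ _
      ((HomotopyCategory.quotient _ _).map (F.map f)) := by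
    rw [HomotopyCategory.quotient_map_mem_quasiIso_iff, HomologicalComplex.mem_quasiIso_iff]
    exact hq
  rw [HomotopyCategory.quasiIso_eq_subcategoryAcyclic_W] at h1
  have h2 := ((HomotopyCategory.subcategoryAcyclic _).trW_iff_of_distinguished _
    (HomotopyCategory.mappingCone_triangleh_distinguished (F.map f))).1 h1
  have h2' : HomotopyCategory.subcategoryAcyclic _
      ((HomotopyCategory.quotient _ _).obj (CochainComplex.mappingCone (F.map f))) := h2
  rw [HomotopyCategory.quotient_obj_mem_subcategoryAcyclic_iff_exactAt] at h2'
  have h3 := h2' n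
  rw [HomologicalComplex.exactAt_iff_isZero_homology] at h3 ⊢
  exact h3.of_iso ((HomologicalComplex.homologyFunctor _ _ n).mapIso
    (CochainComplex.mappingCone.mapHomologicalComplexIso f _))

/-- any `𝒞`-quasi-isomorphism between bounded-above complexes with terms
in `𝒞` is a homotopy equivalence. -/
theorem stmt2 (𝒞 : Set A) (X Y : CochainComplex A ℤ)
    (hX : ∀ i, X.X i ∈ 𝒞) (hbX : BoundedAbove X)
    (hY : ∀ i, Y.X i ∈ 𝒞) (hbY : BoundedAbove Y)
    (f : X ⟶ Y) (hf : CQuasiIso 𝒞 f) :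
    ∃ g : Y ⟶ X, Nonempty (Homotopy (f ≫ g) (𝟙 X)) ∧ Nonempty (Homotopy (g ≫ f) (𝟙 Y)) := by
  obtain ⟨NX, hNX⟩ := hbX
  obtain ⟨NY, hNY⟩ := hbY
  set Z := CochainComplex.mappingCone f with hZ
  have hac : CAcyclic 𝒞 Z := cone_cacyclic 𝒞 f hf
  -- boundedness of the cone
  have hN : ∀ i, max NX NY < i → IsZero (Z.X i) := by
    intro i hi
    rw [IsZero.iff_id_eq_zero]
    refine CochainComplex.mappingCone.ext_from f (i+1) i rfl ?_ ?_
    · exact (hNX (i+1) (by omega)).eq_of_src _ _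
    · exact (hNY i (by omega)).eq_of_src _ _
  -- the surjectivity input for the contraction
  have hsurj : ∀ (n : ℤ) (z : Z.X n ⟶ Z.X n), z ≫ Z.d n (n+1) = 0 →
      ∃ w : Z.X n ⟶ Z.X (n-1), w ≫ Z.d (n-1) n = z := by
    intro n z hz
    obtain ⟨b₁, hb₁⟩ := exact_surj n (hac _ (hX (n+1)) n)
      ((CochainComplex.mappingCone.inl f).v (n+1) n (by omega) ≫ z)
      (by rw [Category.assoc, hz, comp_zero])
    obtain ⟨b₂, hb₂⟩ := exact_surj n (hac _ (hY n) n)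
      ((CochainComplex.mappingCone.inr f).f n ≫ z)
      (by rw [Category.assoc, hz, comp_zero])
    refine ⟨(CochainComplex.mappingCone.fst f).1.v n (n+1) rfl ≫ b₁ +
      (CochainComplex.mappingCone.snd f).v n n (add_zero n) ≫ b₂, ?_⟩
    refine CochainComplex.mappingCone.ext_from f (n+1) n rfl ?_ ?_
    · rw [← Category.assoc, Preadditive.comp_add]
      simp only [← Category.assoc]
      rw [CochainComplex.mappingCone.inl_v_fst_v, CochainComplex.mappingCone.inl_v_snd_v]
      simp only [Category.id_comp, zero_comp, add_zero, Category.assoc, hb₁]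
    · rw [← Category.assoc, Preadditive.comp_add]
      simp only [← Category.assoc]
      rw [CochainComplex.mappingCone.inr_f_fst_v, CochainComplex.mappingCone.inr_f_snd_v]
      simp only [Category.id_comp, zero_comp, zero_add, Category.assoc, hb₂]
  -- the cone is contractible
  have ht : Homotopy (𝟙 Z) 0 := contraction Z (max NX NY) hN hsurj
  -- hence zero in the homotopy category
  have hzero : IsZero ((HomotopyCategory.quotient A (ComplexShape.up ℤ)).obj Z) := by
    rw [IsZero.iff_id_eq_zero]
    have := HomotopyCategory.eq_of_homotopy _ _ ht
    simpa using this
  -- so `f` becomes an isomorphism in the homotopy category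
  have hiso : IsIso ((CochainComplex.mappingCone.triangleh f).mor₁) :=
    ((CochainComplex.mappingCone.triangleh f).isZero₃_iff_isIso₁
      (HomotopyCategory.mappingCone_triangleh_distinguished f)).1 hzero
  have hiso' : IsIso ((HomotopyCategory.quotient A (ComplexShape.up ℤ)).map f) := hiso
  let e := asIso ((HomotopyCategory.quotient A (ComplexShape.up ℤ)).map f)
  obtain ⟨g, hg⟩ := (HomotopyCategory.quotient A (ComplexShape.up ℤ)).map_surjective e.inv
  refine ⟨g, ⟨HomotopyCategory.homotopyOfEq _ _ ?_⟩, ⟨HomotopyCategory.homotopyOfEq _ _ ?_⟩⟩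
  · rw [Functor.map_comp, hg, CategoryTheory.Functor.map_id]
    exact e.hom_inv_id
  · rw [Functor.map_comp, hg, CategoryTheory.Functor.map_id]
    exact e.inv_hom_id
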